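/- Let (Y₁, Y₂) be a pair of random variables taking values in measurable spaces (𝒴₁, μ₁) and (𝒴₂, μ₂) with σ-finite measures, and suppose their joint law has a density of the form π(y₁, y₂) = a(y₁) · b(y₂) · c(T₁(y₁), T₂(y₂)) with respect to the product measure μ₁ × μ₂, where a, b, c are nonnegative measurable functions and T₁, T₂ are measurable statistics. Then Y₁ and Y₂ are conditionally independent given the pair (T₁(Y₁), T₂(Y₂)). -/

import Mathlib

open MeasureTheory
open scoped ENNReal

lemma prod_decomp_real (x y : ℝ) :
    x * y = (max x 0 * max y 0 - max x 0 * max (-y) 0)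
      - (max (-x) 0 * max y 0 - max (-x) 0 * max (-y) 0) := by
  have h1 : max x 0 - max (-x) 0 = x := max_zero_sub_max_neg_zero_eq_self x
  have h2 : max y 0 - max (-y) 0 = y := max_zero_sub_max_neg_zero_eq_self y
  calc x * y = (max x 0 - max (-x) 0) * (max y 0 - max (-y) 0) := by rw [h1, h2]
  _ = _ := by ring

lemma integrable_of_bound {Ω : Type} [MeasurableSpace Ω] (μ : Measure Ω) [IsFiniteMeasure μ]
    (f : Ω → ℝ) (hf : Measurable f) (D : ℝ) (hD : ∀ ω, |f ω| ≤ D) : Integrable f μ :=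
  Integrable.mono' (integrable_const D) hf.aestronglyMeasurable
    (Filter.Eventually.of_forall fun ω => by rw [Real.norm_eq_abs]; exact hD ω)


lemma factored_push
    {Ω 𝒴₁ 𝒴₂ 𝒮₁ 𝒮₂ : Type} [MeasurableSpace Ω]
    [MeasurableSpace 𝒴₁] [MeasurableSpace 𝒴₂] [MeasurableSpace 𝒮₁] [MeasurableSpace 𝒮₂]
    (μ : Measure Ω)
    (μ₁ : Measure 𝒴₁) (μ₂ : Measure 𝒴₂) [SigmaFinite μ₁] [SigmaFinite μ₂]
    (Y₁ : Ω → 𝒴₁) (Y₂ : Ω → 𝒴₂) (hY₁ : Measurable Y₁) (hY₂ : Measurable Y₂)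
    (T₁ : 𝒴₁ → 𝒮₁) (T₂ : 𝒴₂ → 𝒮₂) (hT₁ : Measurable T₁) (hT₂ : Measurable T₂)
    (a : 𝒴₁ → ℝ≥0∞) (b : 𝒴₂ → ℝ≥0∞) (c : 𝒮₁ × 𝒮₂ → ℝ≥0∞)
    (ha : Measurable a) (hb : Measurable b) (hc : Measurable c)
    (hdens : Measure.map (fun ω => (Y₁ ω, Y₂ ω)) μ
      = (μ₁.prod μ₂).withDensity fun y => a y.1 * b y.2 * c (T₁ y.1, T₂ y.2))
    (u : 𝒴₁ → ℝ≥0∞) (v : 𝒴₂ → ℝ≥0∞) (W : 𝒮₁ × 𝒮₂ → ℝ≥0∞)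
    (hu : Measurable u) (hv : Measurable v) (hW : Measurable W) :
    ∫⁻ ω, u (Y₁ ω) * v (Y₂ ω) * W (T₁ (Y₁ ω), T₂ (Y₂ ω)) ∂μ
      = ∫⁻ s₁, ∫⁻ s₂, W (s₁, s₂) * c (s₁, s₂)
          ∂((μ₂.withDensity fun y => b y * v y).map T₂)
          ∂((μ₁.withDensity fun y => a y * u y).map T₁) := by
  have hYp : Measurable fun ω => (Y₁ ω, Y₂ ω) := hY₁.prodMk hY₂
  have hbv : Measurable fun y => b y * v y := hb.mul hv
  have hau : Measurable fun y => a y * u y := ha.mul hu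
  have hWc : Measurable fun p : 𝒮₁ × 𝒮₂ => W p * c p := hW.mul hc
  have hfm : Measurable fun p : 𝒴₁ × 𝒴₂ => u p.1 * v p.2 * W (T₁ p.1, T₂ p.2) :=
    ((hu.comp measurable_fst).mul (hv.comp measurable_snd)).mul
      (hW.comp ((hT₁.comp measurable_fst).prodMk (hT₂.comp measurable_snd)))
  have hdm : Measurable fun p : 𝒴₁ × 𝒴₂ => a p.1 * b p.2 * c (T₁ p.1, T₂ p.2) :=
    ((ha.comp measurable_fst).mul (hb.comp measurable_snd)).mul
      (hc.comp ((hT₁.comp measurable_fst).prodMk (hT₂.comp measurable_snd)))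
  have hΨ : Measurable fun s₁ => ∫⁻ s₂, W (s₁, s₂) * c (s₁, s₂)
      ∂((μ₂.withDensity fun y => b y * v y).map T₂) :=
    Measurable.lintegral_prod_right' hWc
  calc
    ∫⁻ ω, u (Y₁ ω) * v (Y₂ ω) * W (T₁ (Y₁ ω), T₂ (Y₂ ω)) ∂μ
        = ∫⁻ p, u p.1 * v p.2 * W (T₁ p.1, T₂ p.2)
            ∂(Measure.map (fun ω => (Y₁ ω, Y₂ ω)) μ) :=
      (lintegral_map hfm hYp).symm
    _ = ∫⁻ p, (fun p : 𝒴₁ × 𝒴₂ => a p.1 * b p.2 * c (T₁ p.1, T₂ p.2)) p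
          * (u p.1 * v p.2 * W (T₁ p.1, T₂ p.2)) ∂(μ₁.prod μ₂) := by
      rw [hdens, lintegral_withDensity_eq_lintegral_mul _ hdm hfm]
      exact lintegral_congr fun p => rfl
    _ = ∫⁻ y₁, ∫⁻ y₂, a y₁ * b y₂ * c (T₁ y₁, T₂ y₂) * (u y₁ * v y₂ * W (T₁ y₁, T₂ y₂)) ∂μ₂ ∂μ₁ :=
      lintegral_prod _ (hdm.mul hfm).aemeasurable
    _ = ∫⁻ y₁, ∫⁻ y₂, (a y₁ * u y₁)
          * ((b y₂ * v y₂) * ((fun s₂ => W (T₁ y₁, s₂) * c (T₁ y₁, s₂)) (T₂ y₂))) ∂μ₂ ∂μ₁ := by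
      refine lintegral_congr fun y₁ => lintegral_congr fun y₂ => ?_
      show a y₁ * b y₂ * c (T₁ y₁, T₂ y₂) * (u y₁ * v y₂ * W (T₁ y₁, T₂ y₂))
          = a y₁ * u y₁ * (b y₂ * v y₂ * (W (T₁ y₁, T₂ y₂) * c (T₁ y₁, T₂ y₂)))
      ring
    _ = ∫⁻ y₁, (a y₁ * u y₁)
          * ∫⁻ y₂, (b y₂ * v y₂) * ((fun s₂ => W (T₁ y₁, s₂) * c (T₁ y₁, s₂)) (T₂ y₂)) ∂μ₂ ∂μ₁ :=
      lintegral_congr fun y₁ => lintegral_const_mul _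
        (hbv.mul ((hWc.comp measurable_prodMk_left).comp hT₂))
    _ = ∫⁻ y₁, (a y₁ * u y₁) * ((fun s₁ => ∫⁻ s₂, W (s₁, s₂) * c (s₁, s₂)
          ∂((μ₂.withDensity fun y => b y * v y).map T₂)) (T₁ y₁)) ∂μ₁ := by
      refine lintegral_congr fun y₁ => ?_
      beta_reduce
      congr 1
      have h1 : Measurable fun s₂ => W (T₁ y₁, s₂) * c (T₁ y₁, s₂) :=
        hWc.comp measurable_prodMk_left
      have h2 : Measurable fun y₂ => W (T₁ y₁, T₂ y₂) * c (T₁ y₁, T₂ y₂) := h1.comp hT₂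
      rw [lintegral_map h1 hT₂, lintegral_withDensity_eq_lintegral_mul _ hbv h2]
      exact lintegral_congr fun y₂ => rfl
    _ = ∫⁻ s₁, ∫⁻ s₂, W (s₁, s₂) * c (s₁, s₂)
          ∂((μ₂.withDensity fun y => b y * v y).map T₂)
          ∂((μ₁.withDensity fun y => a y * u y).map T₁) := by
      have h3 : Measurable fun y₁ => ∫⁻ s₂, W (T₁ y₁, s₂) * c (T₁ y₁, s₂)
          ∂((μ₂.withDensity fun y => b y * v y).map T₂) := hΨ.comp hT₁
      rw [lintegral_map hΨ hT₁, lintegral_withDensity_eq_lintegral_mul _ hau h3]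
      exact lintegral_congr fun y₁ => rfl

lemma factored_key {S : Type} [MeasurableSpace S] (α αf : Measure S) [SFinite α] [SFinite αf]
    (h : S → ℝ≥0∞) (hh : Measurable h) (hint : ∫⁻ s, h s ∂α ≠ ∞)
    (C : ℝ≥0∞) (hC : C ≠ ∞) (hle : αf ≤ C • α) :
    ∃ F : S → ℝ≥0∞, Measurable F ∧ (∀ s, F s ≤ C) ∧
      ∀ (C' : ℝ≥0∞) (G : S → ℝ≥0∞), C' ≠ ∞ → Measurable G → (∀ s, G s ≤ C' * h s) →
        ∫⁻ s, G s ∂αf = ∫⁻ s, G s * F s ∂α := by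
  set at' : Measure S := α.withDensity h with hat
  set atf : Measure S := αf.withDensity h with hatf
  haveI hfin : IsFiniteMeasure at' := isFiniteMeasure_withDensity hint
  have hle' : atf ≤ C • at' := by
    intro s
    rw [hatf, hat, withDensity_apply' _ s, Measure.smul_apply, withDensity_apply' _ s,
      ← lintegral_smul_measure, ← Measure.restrict_smul]
    exact lintegral_mono' (Measure.restrict_mono le_rfl hle) le_rfl
  haveI hfin2 : IsFiniteMeasure atf := by
    constructor
    calc atf Set.univ ≤ (C • at') Set.univ := hle' _
    _ < ∞ := by
        rw [Measure.smul_apply, smul_eq_mul]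
        exact ENNReal.mul_lt_top hC.lt_top (measure_lt_top at' _)
  have hac : atf ≪ at' := Measure.absolutelyContinuous_of_le_smul hle'
  have hacf : αf ≪ α := Measure.absolutelyContinuous_of_le_smul hle
  set F0 : S → ℝ≥0∞ := atf.rnDeriv at' with hF0
  have hF0m : Measurable F0 := Measure.measurable_rnDeriv _ _
  have hF0le : F0 ≤ᵐ[at'] fun _ => C := by
    refine ae_le_of_forall_setLIntegral_le_of_sigmaFinite hF0m fun s hs _ => ?_
    rw [Measure.setLIntegral_rnDeriv hac s, setLIntegral_const]
    calc atf s ≤ (C • at') s := hle' _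
    _ = C * at' s := by rw [Measure.smul_apply, smul_eq_mul]
  refine ⟨fun s => min (F0 s) C, hF0m.min measurable_const, fun s => min_le_right _ _,
    fun C' G hC' hG hGh => ?_⟩
  have hFae : (fun s => min (F0 s) C) =ᵐ[at'] F0 := by
    filter_upwards [hF0le] with s hs
    exact min_eq_left hs
  have hwd : at'.withDensity (fun s => min (F0 s) C) = atf :=
    (withDensity_congr_ae hFae).trans (Measure.withDensity_rnDeriv_eq _ _ hac)
  have hhfin : ∀ᵐ s ∂α, h s ≠ ∞ := (ae_lt_top hh hint).mono fun s hs => hs.ne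
  have hkey : ∀ s, h s ≠ ∞ → G s / h s * h s = G s := by
    intro s hs
    by_cases h0 : h s = 0
    · have : G s = 0 := le_antisymm (by simpa [h0] using hGh s) zero_le
      simp [this, h0]
    · rw [ENNReal.div_mul_cancel h0 hs]
  have haeα : (fun s => G s / h s * h s) =ᵐ[α] G := hhfin.mono fun s hs => hkey s hs
  have haeαf : (fun s => G s / h s * h s) =ᵐ[αf] G := hacf.ae_le haeα
  have hrm : Measurable fun s => G s / h s := hG.div hh
  calc ∫⁻ s, G s ∂αf = ∫⁻ s, G s / h s * h s ∂αf := (lintegral_congr_ae haeαf).symm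
  _ = ∫⁻ s, G s / h s ∂atf := by
      rw [hatf, lintegral_withDensity_eq_lintegral_mul _ hh hrm]
      exact lintegral_congr fun s => mul_comm _ _
  _ = ∫⁻ s, G s / h s ∂(at'.withDensity fun s => min (F0 s) C) := by rw [hwd]
  _ = ∫⁻ s, min (F0 s) C * (G s / h s) ∂at' :=
      lintegral_withDensity_eq_lintegral_mul _ (hF0m.min measurable_const) hrm
  _ = ∫⁻ s, h s * (min (F0 s) C * (G s / h s)) ∂α :=
      lintegral_withDensity_eq_lintegral_mul _ hh ((hF0m.min measurable_const).mul hrm)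
  _ = ∫⁻ s, G s * min (F0 s) C ∂α := by
      refine lintegral_congr_ae (hhfin.mono fun s hs => ?_)
      show h s * (min (F0 s) C * (G s / h s)) = G s * min (F0 s) C
      rw [mul_comm (min (F0 s) C) (G s / h s), ← mul_assoc, mul_comm (h s) (G s / h s),
        hkey s hs]


section
variable {Ω 𝒴₁ 𝒴₂ 𝒮₁ 𝒮₂ : Type} [mΩ : MeasurableSpace Ω]
    [MeasurableSpace 𝒴₁] [MeasurableSpace 𝒴₂] [MeasurableSpace 𝒮₁] [MeasurableSpace 𝒮₂]

lemma factored_condexp_pos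
    (μ : Measure Ω) [IsProbabilityMeasure μ]
    (μ₁ : Measure 𝒴₁) (μ₂ : Measure 𝒴₂) [SigmaFinite μ₁] [SigmaFinite μ₂]
    (Y₁ : Ω → 𝒴₁) (Y₂ : Ω → 𝒴₂) (hY₁ : Measurable Y₁) (hY₂ : Measurable Y₂)
    (T₁ : 𝒴₁ → 𝒮₁) (T₂ : 𝒴₂ → 𝒮₂) (hT₁ : Measurable T₁) (hT₂ : Measurable T₂)
    (a : 𝒴₁ → ℝ≥0∞) (b : 𝒴₂ → ℝ≥0∞) (c : 𝒮₁ × 𝒮₂ → ℝ≥0∞)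
    (ha : Measurable a) (hb : Measurable b) (hc : Measurable c)
    (hdens : Measure.map (fun ω => (Y₁ ω, Y₂ ω)) μ
      = (μ₁.prod μ₂).withDensity fun y => a y.1 * b y.2 * c (T₁ y.1, T₂ y.2))
    (φ : 𝒴₁ → ℝ) (ψ : 𝒴₂ → ℝ) (hφ : Measurable φ) (hψ : Measurable ψ)
    (C₁ C₂ : ℝ) (hC₁0 : 0 ≤ C₁) (hC₂0 : 0 ≤ C₂)
    (hφ0 : ∀ y, 0 ≤ φ y) (hφC : ∀ y, φ y ≤ C₁) (hψ0 : ∀ y, 0 ≤ ψ y) (hψC : ∀ y, ψ y ≤ C₂) :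
    μ[fun ω => φ (Y₁ ω) * ψ (Y₂ ω) |
        MeasurableSpace.comap (fun ω => (T₁ (Y₁ ω), T₂ (Y₂ ω))) inferInstance]
      =ᵐ[μ]
    fun ω =>
      (μ[fun ω' => φ (Y₁ ω') |
          MeasurableSpace.comap (fun ω => (T₁ (Y₁ ω), T₂ (Y₂ ω))) inferInstance]) ω *
      (μ[fun ω' => ψ (Y₂ ω') |
          MeasurableSpace.comap (fun ω => (T₁ (Y₁ ω), T₂ (Y₂ ω))) inferInstance]) ω := by
  classical
  have hS : Measurable fun ω => (T₁ (Y₁ ω), T₂ (Y₂ ω)) := (hT₁.comp hY₁).prodMk (hT₂.comp hY₂)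
  have hm : MeasurableSpace.comap (fun ω => (T₁ (Y₁ ω), T₂ (Y₂ ω))) inferInstance ≤ mΩ := hS.comap_le
  haveI : SigmaFinite (μ.trim hm) := by
    haveI : IsFiniteMeasure (μ.trim hm) := isFiniteMeasure_trim hm
    infer_instance
  set φ' : 𝒴₁ → ℝ≥0∞ := fun y => ENNReal.ofReal (φ y) with hφ'def
  set ψ' : 𝒴₂ → ℝ≥0∞ := fun y => ENNReal.ofReal (ψ y) with hψ'def
  have hφ'm : Measurable φ' := ENNReal.measurable_ofReal.comp hφ
  have hψ'm : Measurable ψ' := ENNReal.measurable_ofReal.comp hψ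
  set CE₁ : ℝ≥0∞ := ENNReal.ofReal C₁ with hCE₁def
  set CE₂ : ℝ≥0∞ := ENNReal.ofReal C₂ with hCE₂def
  have hCE₁ne : CE₁ ≠ ∞ := ENNReal.ofReal_ne_top
  have hCE₂ne : CE₂ ≠ ∞ := ENNReal.ofReal_ne_top
  have hφ'le : ∀ y, φ' y ≤ CE₁ := fun y => ENNReal.ofReal_le_ofReal (hφC y)
  have hψ'le : ∀ y, ψ' y ≤ CE₂ := fun y => ENNReal.ofReal_le_ofReal (hψC y)
  set α : Measure 𝒮₁ := (μ₁.withDensity a).map T₁ with hα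
  set β : Measure 𝒮₂ := (μ₂.withDensity b).map T₂ with hβ
  set αφ : Measure 𝒮₁ := (μ₁.withDensity fun y => a y * φ' y).map T₁ with hαφ
  set βψ : Measure 𝒮₂ := (μ₂.withDensity fun y => b y * ψ' y).map T₂ with hβψ
  haveI : SFinite α := by rw [hα]; infer_instance
  haveI : SFinite β := by rw [hβ]; infer_instance
  haveI : SFinite αφ := by rw [hαφ]; infer_instance
  haveI : SFinite βψ := by rw [hβψ]; infer_instance
  set h : 𝒮₁ → ℝ≥0∞ := fun s₁ => ∫⁻ s₂, c (s₁, s₂) ∂β with hhdef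
  set k : 𝒮₂ → ℝ≥0∞ := fun s₂ => ∫⁻ s₁, c (s₁, s₂) ∂α with hkdef
  have hhm : Measurable h := Measurable.lintegral_prod_right' hc
  have hkm : Measurable k := Measurable.lintegral_prod_left' hc
  have P := factored_push μ μ₁ μ₂ Y₁ Y₂ hY₁ hY₂ T₁ T₂ hT₁ hT₂ a b c ha hb hc hdens
  have hα1 : ((μ₁.withDensity fun y => a y * (fun _ : 𝒴₁ => (1:ℝ≥0∞)) y).map T₁) = α := by
    rw [hα]
    congr 1
    exact withDensity_congr_ae (Filter.Eventually.of_forall fun y => mul_one _)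
  have hβ1 : ((μ₂.withDensity fun y => b y * (fun _ : 𝒴₂ => (1:ℝ≥0∞)) y).map T₂) = β := by
    rw [hβ]
    congr 1
    exact withDensity_congr_ae (Filter.Eventually.of_forall fun y => mul_one _)
  have hswap : ∫⁻ s₁, ∫⁻ s₂, c (s₁, s₂) ∂β ∂α = ∫⁻ s₂, ∫⁻ s₁, c (s₁, s₂) ∂α ∂β :=
    lintegral_lintegral_swap
      (by exact (hc.comp (measurable_fst.prodMk measurable_snd)).aemeasurable)
  have htot : ∫⁻ s₁, ∫⁻ s₂, c (s₁, s₂) ∂β ∂α = 1 := by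
    have H := P (fun _ => 1) (fun _ => 1) (fun _ => 1)
      measurable_const measurable_const measurable_const
    rw [hα1, hβ1] at H
    simp only [one_mul, mul_one, lintegral_one, measure_univ] at H
    exact H.symm
  have hint : ∫⁻ s₁, h s₁ ∂α ≠ ∞ := by
    show (∫⁻ s₁, ∫⁻ s₂, c (s₁, s₂) ∂β ∂α) ≠ ∞
    rw [htot]; exact ENNReal.one_ne_top
  have kint : ∫⁻ s₂, k s₂ ∂β ≠ ∞ := by
    show (∫⁻ s₂, ∫⁻ s₁, c (s₁, s₂) ∂α ∂β) ≠ ∞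
    rw [← hswap, htot]; exact ENNReal.one_ne_top
  have hαφle : αφ ≤ CE₁ • α := by
    rw [hαφ, hα]
    calc (μ₁.withDensity fun y => a y * φ' y).map T₁
        ≤ (μ₁.withDensity fun y => CE₁ * a y).map T₁ := by
          refine Measure.map_mono (withDensity_mono (Filter.Eventually.of_forall fun y => ?_)) hT₁
          calc a y * φ' y ≤ a y * CE₁ := mul_le_mul_right (hφ'le y) _
          _ = CE₁ * a y := mul_comm _ _
    _ = CE₁ • (μ₁.withDensity a).map T₁ := by
          rw [show (fun y => CE₁ * a y) = CE₁ • a from funext fun y => rfl,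
            withDensity_smul CE₁ ha, Measure.map_smul]
  have hβψle : βψ ≤ CE₂ • β := by
    rw [hβψ, hβ]
    calc (μ₂.withDensity fun y => b y * ψ' y).map T₂
        ≤ (μ₂.withDensity fun y => CE₂ * b y).map T₂ := by
          refine Measure.map_mono (withDensity_mono (Filter.Eventually.of_forall fun y => ?_)) hT₂
          calc b y * ψ' y ≤ b y * CE₂ := mul_le_mul_right (hψ'le y) _
          _ = CE₂ * b y := mul_comm _ _
    _ = CE₂ • (μ₂.withDensity b).map T₂ := by
          rw [show (fun y => CE₂ * b y) = CE₂ • b from funext fun y => rfl,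
            withDensity_smul CE₂ hb, Measure.map_smul]
  obtain ⟨F₁, hF₁m, hF₁le, hK₁⟩ := factored_key α αφ h hhm hint CE₁ hCE₁ne hαφle
  obtain ⟨F₂, hF₂m, hF₂le, hK₂⟩ := factored_key β βψ k hkm kint CE₂ hCE₂ne hβψle
  have hind : ∀ (E : Set (𝒮₁ × 𝒮₂)) (p : 𝒮₁ × 𝒮₂), E.indicator (fun _ => (1:ℝ≥0∞)) p ≤ 1 := by
    intro E p; by_cases hp : p ∈ E <;> simp [hp]
  have I1 : ∀ E : Set (𝒮₁ × 𝒮₂), MeasurableSet E →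
      ∫⁻ ω, φ' (Y₁ ω) * E.indicator (fun _ => (1:ℝ≥0∞)) (T₁ (Y₁ ω), T₂ (Y₂ ω)) ∂μ
        = ∫⁻ ω, F₁ (T₁ (Y₁ ω)) * E.indicator (fun _ => (1:ℝ≥0∞)) (T₁ (Y₁ ω), T₂ (Y₂ ω)) ∂μ := by
    intro E hE
    have hWm : Measurable (E.indicator fun _ => (1:ℝ≥0∞)) := measurable_const.indicator hE
    have hWcm : Measurable fun p : 𝒮₁ × 𝒮₂ => E.indicator (fun _ => (1:ℝ≥0∞)) p * c p :=
      hWm.mul hc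
    have hGm : Measurable fun s₁ => ∫⁻ s₂, E.indicator (fun _ => (1:ℝ≥0∞)) (s₁, s₂) * c (s₁, s₂) ∂β :=
      Measurable.lintegral_prod_right' hWcm
    have hGle : ∀ s₁, (∫⁻ s₂, E.indicator (fun _ => (1:ℝ≥0∞)) (s₁, s₂) * c (s₁, s₂) ∂β) ≤ 1 * h s₁ := by
      intro s₁
      rw [one_mul]
      show _ ≤ ∫⁻ s₂, c (s₁, s₂) ∂β
      refine lintegral_mono fun s₂ => ?_
      calc E.indicator (fun _ => (1:ℝ≥0∞)) (s₁, s₂) * c (s₁, s₂) ≤ 1 * c (s₁, s₂) :=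
            mul_le_mul_left (hind E _) _
      _ = c (s₁, s₂) := one_mul _
    have HL := P φ' (fun _ => 1) (E.indicator fun _ => (1:ℝ≥0∞)) hφ'm measurable_const hWm
    rw [hβ1, ← hαφ] at HL
    have HR := P (fun _ => 1) (fun _ => 1)
      (fun p => F₁ p.1 * E.indicator (fun _ => (1:ℝ≥0∞)) p) measurable_const measurable_const
      ((hF₁m.comp measurable_fst).mul hWm)
    rw [hα1, hβ1] at HR
    have HK := hK₁ 1 (fun s₁ => ∫⁻ s₂, E.indicator (fun _ => (1:ℝ≥0∞)) (s₁, s₂) * c (s₁, s₂) ∂β)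
      ENNReal.one_ne_top hGm hGle
    calc ∫⁻ ω, φ' (Y₁ ω) * E.indicator (fun _ => (1:ℝ≥0∞)) (T₁ (Y₁ ω), T₂ (Y₂ ω)) ∂μ
        = ∫⁻ ω, φ' (Y₁ ω) * (fun _ : 𝒴₂ => (1:ℝ≥0∞)) (Y₂ ω)
            * E.indicator (fun _ => (1:ℝ≥0∞)) (T₁ (Y₁ ω), T₂ (Y₂ ω)) ∂μ := by
          refine lintegral_congr fun ω => ?_
          show _ = φ' (Y₁ ω) * 1 * _
          rw [mul_one]
    _ = ∫⁻ s₁, ∫⁻ s₂, E.indicator (fun _ => (1:ℝ≥0∞)) (s₁, s₂) * c (s₁, s₂) ∂β ∂αφ := HL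
    _ = ∫⁻ s₁, (∫⁻ s₂, E.indicator (fun _ => (1:ℝ≥0∞)) (s₁, s₂) * c (s₁, s₂) ∂β) * F₁ s₁ ∂α := HK
    _ = ∫⁻ s₁, ∫⁻ s₂, (fun p : 𝒮₁ × 𝒮₂ => F₁ p.1 * E.indicator (fun _ => (1:ℝ≥0∞)) p) (s₁, s₂)
          * c (s₁, s₂) ∂β ∂α := by
          refine lintegral_congr fun s₁ => ?_
          have hmm2 : Measurable fun s₂ => E.indicator (fun _ => (1:ℝ≥0∞)) (s₁, s₂) * c (s₁, s₂) :=
            hWcm.comp measurable_prodMk_left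
          rw [← lintegral_mul_const _ hmm2]
          refine lintegral_congr fun s₂ => ?_
          show E.indicator (fun _ => (1:ℝ≥0∞)) (s₁, s₂) * c (s₁, s₂) * F₁ s₁
            = F₁ s₁ * E.indicator (fun _ => (1:ℝ≥0∞)) (s₁, s₂) * c (s₁, s₂)
          ring
    _ = ∫⁻ ω, (fun _ : 𝒴₁ => (1:ℝ≥0∞)) (Y₁ ω) * (fun _ : 𝒴₂ => (1:ℝ≥0∞)) (Y₂ ω)
          * (fun p : 𝒮₁ × 𝒮₂ => F₁ p.1 * E.indicator (fun _ => (1:ℝ≥0∞)) p)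
            (T₁ (Y₁ ω), T₂ (Y₂ ω)) ∂μ := HR.symm
    _ = ∫⁻ ω, F₁ (T₁ (Y₁ ω)) * E.indicator (fun _ => (1:ℝ≥0∞)) (T₁ (Y₁ ω), T₂ (Y₂ ω)) ∂μ := by
          refine lintegral_congr fun ω => ?_
          show 1 * 1 * (F₁ (T₁ (Y₁ ω)) * _) = _
          ring
  have I2 : ∀ E : Set (𝒮₁ × 𝒮₂), MeasurableSet E →
      ∫⁻ ω, ψ' (Y₂ ω) * E.indicator (fun _ => (1:ℝ≥0∞)) (T₁ (Y₁ ω), T₂ (Y₂ ω)) ∂μ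
        = ∫⁻ ω, F₂ (T₂ (Y₂ ω)) * E.indicator (fun _ => (1:ℝ≥0∞)) (T₁ (Y₁ ω), T₂ (Y₂ ω)) ∂μ := by
    intro E hE
    have hWm : Measurable (E.indicator fun _ => (1:ℝ≥0∞)) := measurable_const.indicator hE
    have hWcm : Measurable fun p : 𝒮₁ × 𝒮₂ => E.indicator (fun _ => (1:ℝ≥0∞)) p * c p :=
      hWm.mul hc
    have hG₂m : Measurable fun s₂ => ∫⁻ s₁, E.indicator (fun _ => (1:ℝ≥0∞)) (s₁, s₂) * c (s₁, s₂) ∂α :=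
      Measurable.lintegral_prod_left' hWcm
    have hG₂le : ∀ s₂, (∫⁻ s₁, E.indicator (fun _ => (1:ℝ≥0∞)) (s₁, s₂) * c (s₁, s₂) ∂α) ≤ 1 * k s₂ := by
      intro s₂
      rw [one_mul]
      show _ ≤ ∫⁻ s₁, c (s₁, s₂) ∂α
      refine lintegral_mono fun s₁ => ?_
      calc E.indicator (fun _ => (1:ℝ≥0∞)) (s₁, s₂) * c (s₁, s₂) ≤ 1 * c (s₁, s₂) :=
            mul_le_mul_left (hind E _) _
      _ = c (s₁, s₂) := one_mul _
    have HL := P (fun _ => 1) ψ' (E.indicator fun _ => (1:ℝ≥0∞)) measurable_const hψ'm hWm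
    rw [hα1, ← hβψ] at HL
    have HR := P (fun _ => 1) (fun _ => 1)
      (fun p => F₂ p.2 * E.indicator (fun _ => (1:ℝ≥0∞)) p) measurable_const measurable_const
      ((hF₂m.comp measurable_snd).mul hWm)
    rw [hα1, hβ1] at HR
    have HK := hK₂ 1 (fun s₂ => ∫⁻ s₁, E.indicator (fun _ => (1:ℝ≥0∞)) (s₁, s₂) * c (s₁, s₂) ∂α)
      ENNReal.one_ne_top hG₂m hG₂le
    calc ∫⁻ ω, ψ' (Y₂ ω) * E.indicator (fun _ => (1:ℝ≥0∞)) (T₁ (Y₁ ω), T₂ (Y₂ ω)) ∂μ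
        = ∫⁻ ω, (fun _ : 𝒴₁ => (1:ℝ≥0∞)) (Y₁ ω) * ψ' (Y₂ ω)
            * E.indicator (fun _ => (1:ℝ≥0∞)) (T₁ (Y₁ ω), T₂ (Y₂ ω)) ∂μ := by
          refine lintegral_congr fun ω => ?_
          show _ = 1 * ψ' (Y₂ ω) * _
          rw [one_mul]
    _ = ∫⁻ s₁, ∫⁻ s₂, E.indicator (fun _ => (1:ℝ≥0∞)) (s₁, s₂) * c (s₁, s₂) ∂βψ ∂α := HL
    _ = ∫⁻ s₂, ∫⁻ s₁, E.indicator (fun _ => (1:ℝ≥0∞)) (s₁, s₂) * c (s₁, s₂) ∂α ∂βψ :=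
          lintegral_lintegral_swap
            (by exact (hWcm.comp (measurable_fst.prodMk measurable_snd)).aemeasurable)
    _ = ∫⁻ s₂, (∫⁻ s₁, E.indicator (fun _ => (1:ℝ≥0∞)) (s₁, s₂) * c (s₁, s₂) ∂α) * F₂ s₂ ∂β := HK
    _ = ∫⁻ s₂, ∫⁻ s₁, E.indicator (fun _ => (1:ℝ≥0∞)) (s₁, s₂) * c (s₁, s₂) * F₂ s₂ ∂α ∂β := by
          refine lintegral_congr fun s₂ => ?_
          have hmm2 : Measurable fun s₁ => E.indicator (fun _ => (1:ℝ≥0∞)) (s₁, s₂) * c (s₁, s₂) :=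
            hWcm.comp measurable_prodMk_right
          rw [← lintegral_mul_const _ hmm2]
    _ = ∫⁻ s₁, ∫⁻ s₂, E.indicator (fun _ => (1:ℝ≥0∞)) (s₁, s₂) * c (s₁, s₂) * F₂ s₂ ∂β ∂α :=
          lintegral_lintegral_swap (μ := β) (ν := α)
            (by exact ((hWcm.comp (measurable_snd.prodMk measurable_fst)).mul
              (hF₂m.comp measurable_fst)).aemeasurable)
    _ = ∫⁻ s₁, ∫⁻ s₂, (fun p : 𝒮₁ × 𝒮₂ => F₂ p.2 * E.indicator (fun _ => (1:ℝ≥0∞)) p) (s₁, s₂)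
          * c (s₁, s₂) ∂β ∂α := by
          refine lintegral_congr fun s₁ => lintegral_congr fun s₂ => ?_
          show E.indicator (fun _ => (1:ℝ≥0∞)) (s₁, s₂) * c (s₁, s₂) * F₂ s₂
            = F₂ s₂ * E.indicator (fun _ => (1:ℝ≥0∞)) (s₁, s₂) * c (s₁, s₂)
          ring
    _ = ∫⁻ ω, (fun _ : 𝒴₁ => (1:ℝ≥0∞)) (Y₁ ω) * (fun _ : 𝒴₂ => (1:ℝ≥0∞)) (Y₂ ω)
          * (fun p : 𝒮₁ × 𝒮₂ => F₂ p.2 * E.indicator (fun _ => (1:ℝ≥0∞)) p)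
            (T₁ (Y₁ ω), T₂ (Y₂ ω)) ∂μ := HR.symm
    _ = ∫⁻ ω, F₂ (T₂ (Y₂ ω)) * E.indicator (fun _ => (1:ℝ≥0∞)) (T₁ (Y₁ ω), T₂ (Y₂ ω)) ∂μ := by
          refine lintegral_congr fun ω => ?_
          show 1 * 1 * (F₂ (T₂ (Y₂ ω)) * _) = _
          ring
  have I3 : ∀ E : Set (𝒮₁ × 𝒮₂), MeasurableSet E →
      ∫⁻ ω, φ' (Y₁ ω) * ψ' (Y₂ ω) * E.indicator (fun _ => (1:ℝ≥0∞)) (T₁ (Y₁ ω), T₂ (Y₂ ω)) ∂μ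
        = ∫⁻ ω, F₁ (T₁ (Y₁ ω)) * F₂ (T₂ (Y₂ ω))
            * E.indicator (fun _ => (1:ℝ≥0∞)) (T₁ (Y₁ ω), T₂ (Y₂ ω)) ∂μ := by
    intro E hE
    have hWm : Measurable (E.indicator fun _ => (1:ℝ≥0∞)) := measurable_const.indicator hE
    have hWcm : Measurable fun p : 𝒮₁ × 𝒮₂ => E.indicator (fun _ => (1:ℝ≥0∞)) p * c p :=
      hWm.mul hc
    have hG₃m : Measurable fun s₁ => ∫⁻ s₂, E.indicator (fun _ => (1:ℝ≥0∞)) (s₁, s₂) * c (s₁, s₂) ∂βψ :=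
      Measurable.lintegral_prod_right' hWcm
    have hG₃le : ∀ s₁, (∫⁻ s₂, E.indicator (fun _ => (1:ℝ≥0∞)) (s₁, s₂) * c (s₁, s₂) ∂βψ)
        ≤ CE₂ * h s₁ := by
      intro s₁
      have step1 : (∫⁻ s₂, E.indicator (fun _ => (1:ℝ≥0∞)) (s₁, s₂) * c (s₁, s₂) ∂βψ)
          ≤ ∫⁻ s₂, c (s₁, s₂) ∂βψ := by
        refine lintegral_mono fun s₂ => ?_
        calc E.indicator (fun _ => (1:ℝ≥0∞)) (s₁, s₂) * c (s₁, s₂) ≤ 1 * c (s₁, s₂) :=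
              mul_le_mul_left (hind E _) _
        _ = c (s₁, s₂) := one_mul _
      have step2 : (∫⁻ s₂, c (s₁, s₂) ∂βψ) ≤ ∫⁻ s₂, c (s₁, s₂) ∂(CE₂ • β) :=
        lintegral_mono' hβψle le_rfl
      have step3 : (∫⁻ s₂, c (s₁, s₂) ∂(CE₂ • β)) = CE₂ * h s₁ := lintegral_smul_measure _ _
      exact step1.trans (step2.trans_eq step3)
    have HK1 := hK₁ CE₂ (fun s₁ => ∫⁻ s₂, E.indicator (fun _ => (1:ℝ≥0∞)) (s₁, s₂) * c (s₁, s₂) ∂βψ)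
      hCE₂ne hG₃m hG₃le
    have hHm : Measurable fun s₂ => ∫⁻ s₁, E.indicator (fun _ => (1:ℝ≥0∞)) (s₁, s₂) * c (s₁, s₂)
        * F₁ s₁ ∂α :=
      Measurable.lintegral_prod_left' (hWcm.mul (hF₁m.comp measurable_fst))
    have hHle : ∀ s₂, (∫⁻ s₁, E.indicator (fun _ => (1:ℝ≥0∞)) (s₁, s₂) * c (s₁, s₂) * F₁ s₁ ∂α)
        ≤ CE₁ * k s₂ := by
      intro s₂
      have step1 : (∫⁻ s₁, E.indicator (fun _ => (1:ℝ≥0∞)) (s₁, s₂) * c (s₁, s₂) * F₁ s₁ ∂α)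
          ≤ ∫⁻ s₁, c (s₁, s₂) * CE₁ ∂α := by
        refine lintegral_mono fun s₁ => ?_
        refine mul_le_mul' ?_ (hF₁le s₁)
        calc E.indicator (fun _ => (1:ℝ≥0∞)) (s₁, s₂) * c (s₁, s₂) ≤ 1 * c (s₁, s₂) :=
              mul_le_mul_left (hind E _) _
        _ = c (s₁, s₂) := one_mul _
      have step2 : (∫⁻ s₁, c (s₁, s₂) * CE₁ ∂α) = CE₁ * k s₂ := by
        have hcs : Measurable fun s₁ => c (s₁, s₂) := hc.comp measurable_prodMk_right
        rw [lintegral_mul_const _ hcs]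
        exact mul_comm _ _
      exact step1.trans_eq step2
    have HK2 := hK₂ CE₁ (fun s₂ => ∫⁻ s₁, E.indicator (fun _ => (1:ℝ≥0∞)) (s₁, s₂) * c (s₁, s₂)
        * F₁ s₁ ∂α) hCE₁ne hHm hHle
    have HL := P φ' ψ' (E.indicator fun _ => (1:ℝ≥0∞)) hφ'm hψ'm hWm
    rw [← hαφ, ← hβψ] at HL
    have HR := P (fun _ => 1) (fun _ => 1)
      (fun p => F₁ p.1 * F₂ p.2 * E.indicator (fun _ => (1:ℝ≥0∞)) p)
      measurable_const measurable_const
      (((hF₁m.comp measurable_fst).mul (hF₂m.comp measurable_snd)).mul hWm)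
    rw [hα1, hβ1] at HR
    calc ∫⁻ ω, φ' (Y₁ ω) * ψ' (Y₂ ω) * E.indicator (fun _ => (1:ℝ≥0∞)) (T₁ (Y₁ ω), T₂ (Y₂ ω)) ∂μ
        = ∫⁻ s₁, ∫⁻ s₂, E.indicator (fun _ => (1:ℝ≥0∞)) (s₁, s₂) * c (s₁, s₂) ∂βψ ∂αφ := HL
    _ = ∫⁻ s₁, (∫⁻ s₂, E.indicator (fun _ => (1:ℝ≥0∞)) (s₁, s₂) * c (s₁, s₂) ∂βψ) * F₁ s₁ ∂α := HK1
    _ = ∫⁻ s₁, ∫⁻ s₂, E.indicator (fun _ => (1:ℝ≥0∞)) (s₁, s₂) * c (s₁, s₂) * F₁ s₁ ∂βψ ∂α := by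
          refine lintegral_congr fun s₁ => ?_
          have hmm3 : Measurable fun s₂ => E.indicator (fun _ => (1:ℝ≥0∞)) (s₁, s₂) * c (s₁, s₂) :=
            hWcm.comp measurable_prodMk_left
          rw [← lintegral_mul_const _ hmm3]
    _ = ∫⁻ s₂, ∫⁻ s₁, E.indicator (fun _ => (1:ℝ≥0∞)) (s₁, s₂) * c (s₁, s₂) * F₁ s₁ ∂α ∂βψ :=
          lintegral_lintegral_swap (μ := α) (ν := βψ)
            (by exact ((hWcm.comp (measurable_fst.prodMk measurable_snd)).mul
              (hF₁m.comp measurable_fst)).aemeasurable)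
    _ = ∫⁻ s₂, (∫⁻ s₁, E.indicator (fun _ => (1:ℝ≥0∞)) (s₁, s₂) * c (s₁, s₂) * F₁ s₁ ∂α)
          * F₂ s₂ ∂β := HK2
    _ = ∫⁻ s₂, ∫⁻ s₁, E.indicator (fun _ => (1:ℝ≥0∞)) (s₁, s₂) * c (s₁, s₂) * F₁ s₁ * F₂ s₂ ∂α ∂β := by
          refine lintegral_congr fun s₂ => ?_
          have hmm4 : Measurable fun s₁ => E.indicator (fun _ => (1:ℝ≥0∞)) (s₁, s₂) * c (s₁, s₂)
              * F₁ s₁ := (hWcm.comp measurable_prodMk_right).mul hF₁m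
          rw [← lintegral_mul_const _ hmm4]
    _ = ∫⁻ s₁, ∫⁻ s₂, E.indicator (fun _ => (1:ℝ≥0∞)) (s₁, s₂) * c (s₁, s₂) * F₁ s₁ * F₂ s₂ ∂β ∂α :=
          lintegral_lintegral_swap (μ := β) (ν := α)
            (by exact (((hWcm.comp (measurable_snd.prodMk measurable_fst)).mul
              (hF₁m.comp measurable_snd)).mul (hF₂m.comp measurable_fst)).aemeasurable)
    _ = ∫⁻ s₁, ∫⁻ s₂, (fun p : 𝒮₁ × 𝒮₂ => F₁ p.1 * F₂ p.2 * E.indicator (fun _ => (1:ℝ≥0∞)) p)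
          (s₁, s₂) * c (s₁, s₂) ∂β ∂α := by
          refine lintegral_congr fun s₁ => lintegral_congr fun s₂ => ?_
          show E.indicator (fun _ => (1:ℝ≥0∞)) (s₁, s₂) * c (s₁, s₂) * F₁ s₁ * F₂ s₂
            = F₁ s₁ * F₂ s₂ * E.indicator (fun _ => (1:ℝ≥0∞)) (s₁, s₂) * c (s₁, s₂)
          ring
    _ = ∫⁻ ω, (fun _ : 𝒴₁ => (1:ℝ≥0∞)) (Y₁ ω) * (fun _ : 𝒴₂ => (1:ℝ≥0∞)) (Y₂ ω)
          * (fun p : 𝒮₁ × 𝒮₂ => F₁ p.1 * F₂ p.2 * E.indicator (fun _ => (1:ℝ≥0∞)) p)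
            (T₁ (Y₁ ω), T₂ (Y₂ ω)) ∂μ := HR.symm
    _ = ∫⁻ ω, F₁ (T₁ (Y₁ ω)) * F₂ (T₂ (Y₂ ω))
          * E.indicator (fun _ => (1:ℝ≥0∞)) (T₁ (Y₁ ω), T₂ (Y₂ ω)) ∂μ := by
          refine lintegral_congr fun ω => ?_
          show (1:ℝ≥0∞) * 1 * (F₁ (T₁ (Y₁ ω)) * F₂ (T₂ (Y₂ ω))
            * E.indicator (fun _ => (1:ℝ≥0∞)) (T₁ (Y₁ ω), T₂ (Y₂ ω))) = _
          ring
  have conv : ∀ (E : Set (𝒮₁ × 𝒮₂)), MeasurableSet E → ∀ (f : Ω → ℝ≥0∞),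
      ∫⁻ x in (fun ω => (T₁ (Y₁ ω), T₂ (Y₂ ω))) ⁻¹' E, f x ∂μ
        = ∫⁻ x, f x * E.indicator (fun _ => (1:ℝ≥0∞)) (T₁ (Y₁ x), T₂ (Y₂ x)) ∂μ := by
    intro E hE f
    rw [← lintegral_indicator (hS hE)]
    refine lintegral_congr fun x => ?_
    by_cases hx : (T₁ (Y₁ x), T₂ (Y₂ x)) ∈ E
    · rw [Set.indicator_of_mem (by exact hx), Set.indicator_of_mem hx, mul_one]
    · rw [Set.indicator_of_notMem (by exact hx), Set.indicator_of_notMem hx, mul_zero]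
  have hSmm : Measurable[MeasurableSpace.comap (fun ω => (T₁ (Y₁ ω), T₂ (Y₂ ω))) inferInstance]
      (fun ω => (T₁ (Y₁ ω), T₂ (Y₂ ω))) :=
    comap_measurable _
  have cond1 : (fun ω => (F₁ (T₁ (Y₁ ω))).toReal) =ᵐ[μ] μ[fun ω' => φ (Y₁ ω') |
      MeasurableSpace.comap (fun ω => (T₁ (Y₁ ω), T₂ (Y₂ ω))) inferInstance] := by
    have hcand_m : Measurable fun ω => (F₁ (T₁ (Y₁ ω))).toReal :=
      ENNReal.measurable_toReal.comp (hF₁m.comp (hT₁.comp hY₁))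
    have hFne : ∀ s, F₁ s ≠ ∞ := fun s => ((hF₁le s).trans_lt ENNReal.ofReal_lt_top).ne
    refine ae_eq_condExp_of_forall_setIntegral_eq hm
      (integrable_of_bound μ _ (hφ.comp hY₁) C₁ (fun ω => ?_))
      (fun s hs hμs => ?_) (fun s hs hμs => ?_) ?_
    · rw [abs_of_nonneg (hφ0 _)]; exact hφC _
    · exact (integrable_of_bound μ _ hcand_m CE₁.toReal (fun ω => by
        rw [abs_of_nonneg ENNReal.toReal_nonneg]
        exact ENNReal.toReal_mono hCE₁ne (hF₁le _))).integrableOn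
    · obtain ⟨E, hE, rfl⟩ := hs
      rw [integral_eq_lintegral_of_nonneg_ae
          (Filter.Eventually.of_forall fun x => ENNReal.toReal_nonneg)
          (hcand_m.aestronglyMeasurable.restrict),
        integral_eq_lintegral_of_nonneg_ae
          (Filter.Eventually.of_forall fun x => hφ0 (Y₁ x))
          ((hφ.comp hY₁).aestronglyMeasurable.restrict)]
      congr 1
      calc ∫⁻ x in (fun ω => (T₁ (Y₁ ω), T₂ (Y₂ ω))) ⁻¹' E,
              ENNReal.ofReal (F₁ (T₁ (Y₁ x))).toReal ∂μ
          = ∫⁻ x in (fun ω => (T₁ (Y₁ ω), T₂ (Y₂ ω))) ⁻¹' E, F₁ (T₁ (Y₁ x)) ∂μ :=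
            lintegral_congr fun x => ENNReal.ofReal_toReal (hFne _)
      _ = ∫⁻ x, F₁ (T₁ (Y₁ x)) * E.indicator (fun _ => (1:ℝ≥0∞)) (T₁ (Y₁ x), T₂ (Y₂ x)) ∂μ :=
            conv E hE _
      _ = ∫⁻ x, φ' (Y₁ x) * E.indicator (fun _ => (1:ℝ≥0∞)) (T₁ (Y₁ x), T₂ (Y₂ x)) ∂μ :=
            (I1 E hE).symm
      _ = ∫⁻ x in (fun ω => (T₁ (Y₁ ω), T₂ (Y₂ ω))) ⁻¹' E, φ' (Y₁ x) ∂μ := (conv E hE _).symm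
      _ = ∫⁻ x in (fun ω => (T₁ (Y₁ ω), T₂ (Y₂ ω))) ⁻¹' E, ENNReal.ofReal (φ (Y₁ x)) ∂μ := rfl
    · exact ⟨fun ω => (F₁ (T₁ (Y₁ ω))).toReal,
        Measurable.stronglyMeasurable
          ((ENNReal.measurable_toReal.comp (hF₁m.comp measurable_fst)).comp hSmm),
        Filter.EventuallyEq.rfl⟩
  have cond2 : (fun ω => (F₂ (T₂ (Y₂ ω))).toReal) =ᵐ[μ] μ[fun ω' => ψ (Y₂ ω') |
      MeasurableSpace.comap (fun ω => (T₁ (Y₁ ω), T₂ (Y₂ ω))) inferInstance] := by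
    have hcand_m : Measurable fun ω => (F₂ (T₂ (Y₂ ω))).toReal :=
      ENNReal.measurable_toReal.comp (hF₂m.comp (hT₂.comp hY₂))
    have hFne : ∀ s, F₂ s ≠ ∞ := fun s => ((hF₂le s).trans_lt ENNReal.ofReal_lt_top).ne
    refine ae_eq_condExp_of_forall_setIntegral_eq hm
      (integrable_of_bound μ _ (hψ.comp hY₂) C₂ (fun ω => ?_))
      (fun s hs hμs => ?_) (fun s hs hμs => ?_) ?_
    · rw [abs_of_nonneg (hψ0 _)]; exact hψC _
    · exact (integrable_of_bound μ _ hcand_m CE₂.toReal (fun ω => by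
        rw [abs_of_nonneg ENNReal.toReal_nonneg]
        exact ENNReal.toReal_mono hCE₂ne (hF₂le _))).integrableOn
    · obtain ⟨E, hE, rfl⟩ := hs
      rw [integral_eq_lintegral_of_nonneg_ae
          (Filter.Eventually.of_forall fun x => ENNReal.toReal_nonneg)
          (hcand_m.aestronglyMeasurable.restrict),
        integral_eq_lintegral_of_nonneg_ae
          (Filter.Eventually.of_forall fun x => hψ0 (Y₂ x))
          ((hψ.comp hY₂).aestronglyMeasurable.restrict)]
      congr 1
      calc ∫⁻ x in (fun ω => (T₁ (Y₁ ω), T₂ (Y₂ ω))) ⁻¹' E,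
              ENNReal.ofReal (F₂ (T₂ (Y₂ x))).toReal ∂μ
          = ∫⁻ x in (fun ω => (T₁ (Y₁ ω), T₂ (Y₂ ω))) ⁻¹' E, F₂ (T₂ (Y₂ x)) ∂μ :=
            lintegral_congr fun x => ENNReal.ofReal_toReal (hFne _)
      _ = ∫⁻ x, F₂ (T₂ (Y₂ x)) * E.indicator (fun _ => (1:ℝ≥0∞)) (T₁ (Y₁ x), T₂ (Y₂ x)) ∂μ :=
            conv E hE _
      _ = ∫⁻ x, ψ' (Y₂ x) * E.indicator (fun _ => (1:ℝ≥0∞)) (T₁ (Y₁ x), T₂ (Y₂ x)) ∂μ :=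
            (I2 E hE).symm
      _ = ∫⁻ x in (fun ω => (T₁ (Y₁ ω), T₂ (Y₂ ω))) ⁻¹' E, ψ' (Y₂ x) ∂μ := (conv E hE _).symm
      _ = ∫⁻ x in (fun ω => (T₁ (Y₁ ω), T₂ (Y₂ ω))) ⁻¹' E, ENNReal.ofReal (ψ (Y₂ x)) ∂μ := rfl
    · exact ⟨fun ω => (F₂ (T₂ (Y₂ ω))).toReal,
        Measurable.stronglyMeasurable
          ((ENNReal.measurable_toReal.comp (hF₂m.comp measurable_snd)).comp hSmm),
        Filter.EventuallyEq.rfl⟩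
  have cond3 : (fun ω => (F₁ (T₁ (Y₁ ω))).toReal * (F₂ (T₂ (Y₂ ω))).toReal) =ᵐ[μ]
      μ[fun ω' => φ (Y₁ ω') * ψ (Y₂ ω') |
      MeasurableSpace.comap (fun ω => (T₁ (Y₁ ω), T₂ (Y₂ ω))) inferInstance] := by
    have hcand_m : Measurable fun ω => (F₁ (T₁ (Y₁ ω))).toReal * (F₂ (T₂ (Y₂ ω))).toReal :=
      (ENNReal.measurable_toReal.comp (hF₁m.comp (hT₁.comp hY₁))).mul
        (ENNReal.measurable_toReal.comp (hF₂m.comp (hT₂.comp hY₂)))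
    have hF₁ne : ∀ s, F₁ s ≠ ∞ := fun s => ((hF₁le s).trans_lt ENNReal.ofReal_lt_top).ne
    have hF₂ne : ∀ s, F₂ s ≠ ∞ := fun s => ((hF₂le s).trans_lt ENNReal.ofReal_lt_top).ne
    refine ae_eq_condExp_of_forall_setIntegral_eq hm
      (integrable_of_bound μ _ ((hφ.comp hY₁).mul (hψ.comp hY₂)) (C₁ * C₂) (fun ω => ?_))
      (fun s hs hμs => ?_) (fun s hs hμs => ?_) ?_
    · rw [abs_of_nonneg (mul_nonneg (hφ0 _) (hψ0 _))]
      exact mul_le_mul (hφC _) (hψC _) (hψ0 _) hC₁0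
    · exact (integrable_of_bound μ _ hcand_m (CE₁.toReal * CE₂.toReal) (fun ω => by
        rw [abs_of_nonneg (mul_nonneg ENNReal.toReal_nonneg ENNReal.toReal_nonneg)]
        exact mul_le_mul (ENNReal.toReal_mono hCE₁ne (hF₁le _))
          (ENNReal.toReal_mono hCE₂ne (hF₂le _)) ENNReal.toReal_nonneg
          ENNReal.toReal_nonneg)).integrableOn
    · obtain ⟨E, hE, rfl⟩ := hs
      rw [integral_eq_lintegral_of_nonneg_ae
          (Filter.Eventually.of_forall fun x =>
            mul_nonneg ENNReal.toReal_nonneg ENNReal.toReal_nonneg)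
          (hcand_m.aestronglyMeasurable.restrict),
        integral_eq_lintegral_of_nonneg_ae
          (Filter.Eventually.of_forall fun x => mul_nonneg (hφ0 (Y₁ x)) (hψ0 (Y₂ x)))
          (((hφ.comp hY₁).mul (hψ.comp hY₂)).aestronglyMeasurable.restrict)]
      congr 1
      calc ∫⁻ x in (fun ω => (T₁ (Y₁ ω), T₂ (Y₂ ω))) ⁻¹' E,
              ENNReal.ofReal ((F₁ (T₁ (Y₁ x))).toReal * (F₂ (T₂ (Y₂ x))).toReal) ∂μ
          = ∫⁻ x in (fun ω => (T₁ (Y₁ ω), T₂ (Y₂ ω))) ⁻¹' E,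
              F₁ (T₁ (Y₁ x)) * F₂ (T₂ (Y₂ x)) ∂μ := by
            refine lintegral_congr fun x => ?_
            rw [← ENNReal.toReal_mul, ENNReal.ofReal_toReal (ENNReal.mul_ne_top (hF₁ne _) (hF₂ne _))]
      _ = ∫⁻ x, F₁ (T₁ (Y₁ x)) * F₂ (T₂ (Y₂ x))
            * E.indicator (fun _ => (1:ℝ≥0∞)) (T₁ (Y₁ x), T₂ (Y₂ x)) ∂μ := conv E hE _
      _ = ∫⁻ x, φ' (Y₁ x) * ψ' (Y₂ x)
            * E.indicator (fun _ => (1:ℝ≥0∞)) (T₁ (Y₁ x), T₂ (Y₂ x)) ∂μ := (I3 E hE).symm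
      _ = ∫⁻ x in (fun ω => (T₁ (Y₁ ω), T₂ (Y₂ ω))) ⁻¹' E, φ' (Y₁ x) * ψ' (Y₂ x) ∂μ :=
            (conv E hE _).symm
      _ = ∫⁻ x in (fun ω => (T₁ (Y₁ ω), T₂ (Y₂ ω))) ⁻¹' E,
            ENNReal.ofReal (φ (Y₁ x) * ψ (Y₂ x)) ∂μ :=
            lintegral_congr fun x => (ENNReal.ofReal_mul (hφ0 (Y₁ x))).symm
    · exact ⟨fun ω => (F₁ (T₁ (Y₁ ω))).toReal * (F₂ (T₂ (Y₂ ω))).toReal,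
        Measurable.stronglyMeasurable
          (((ENNReal.measurable_toReal.comp (hF₁m.comp measurable_fst)).comp hSmm).mul
            ((ENNReal.measurable_toReal.comp (hF₂m.comp measurable_snd)).comp hSmm)),
        Filter.EventuallyEq.rfl⟩
  filter_upwards [cond1, cond2, cond3] with ω h1 h2 h3
  rw [← h3, ← h1, ← h2]

end

/-- **Conditional independence from a factored joint density.**
If the joint law of `(Y₁, Y₂)` has density `a(y₁)·b(y₂)·c(T₁ y₁, T₂ y₂)` with respect
to a σ-finite product measure `μ₁ × μ₂`, then `Y₁` and `Y₂` are conditionally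
independent given the pair `(T₁ (Y₁), T₂ (Y₂))`, in the sense that for all bounded
measurable `φ, ψ`,
`E[φ(Y₁)ψ(Y₂) | σ(T₁(Y₁), T₂(Y₂))] = E[φ(Y₁) | σ(...)]·E[ψ(Y₂) | σ(...)]` a.s. -/
theorem condIndep_of_factored_density
    {Ω 𝒴₁ 𝒴₂ 𝒮₁ 𝒮₂ : Type} [MeasurableSpace Ω]
    [MeasurableSpace 𝒴₁] [MeasurableSpace 𝒴₂] [MeasurableSpace 𝒮₁] [MeasurableSpace 𝒮₂]
    (μ : Measure Ω) [IsProbabilityMeasure μ]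
    (μ₁ : Measure 𝒴₁) (μ₂ : Measure 𝒴₂) [SigmaFinite μ₁] [SigmaFinite μ₂]
    (Y₁ : Ω → 𝒴₁) (Y₂ : Ω → 𝒴₂) (hY₁ : Measurable Y₁) (hY₂ : Measurable Y₂)
    (T₁ : 𝒴₁ → 𝒮₁) (T₂ : 𝒴₂ → 𝒮₂) (hT₁ : Measurable T₁) (hT₂ : Measurable T₂)
    (a : 𝒴₁ → ℝ≥0∞) (b : 𝒴₂ → ℝ≥0∞) (c : 𝒮₁ × 𝒮₂ → ℝ≥0∞)
    (ha : Measurable a) (hb : Measurable b) (hc : Measurable c)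
    (hdens : Measure.map (fun ω => (Y₁ ω, Y₂ ω)) μ
      = (μ₁.prod μ₂).withDensity fun y => a y.1 * b y.2 * c (T₁ y.1, T₂ y.2)) :
    ∀ (φ : 𝒴₁ → ℝ) (ψ : 𝒴₂ → ℝ), Measurable φ → Measurable ψ →
      (∃ C, ∀ y, |φ y| ≤ C) → (∃ C, ∀ y, |ψ y| ≤ C) →
      μ[fun ω => φ (Y₁ ω) * ψ (Y₂ ω) |
          MeasurableSpace.comap (fun ω => (T₁ (Y₁ ω), T₂ (Y₂ ω))) inferInstance]
        =ᵐ[μ]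
      fun ω =>
        (μ[fun ω' => φ (Y₁ ω') |
            MeasurableSpace.comap (fun ω => (T₁ (Y₁ ω), T₂ (Y₂ ω))) inferInstance]) ω *
        (μ[fun ω' => ψ (Y₂ ω') |
            MeasurableSpace.comap (fun ω => (T₁ (Y₁ ω), T₂ (Y₂ ω))) inferInstance]) ω := by
  rintro φ ψ hφ hψ ⟨C₁, hC₁⟩ ⟨C₂, hC₂⟩
  have hS : Measurable fun ω => (T₁ (Y₁ ω), T₂ (Y₂ ω)) := (hT₁.comp hY₁).prodMk (hT₂.comp hY₂)
  have hm : MeasurableSpace.comap (fun ω => (T₁ (Y₁ ω), T₂ (Y₂ ω))) inferInstance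
      ≤ ‹MeasurableSpace Ω› := hS.comap_le
  haveI : SigmaFinite (μ.trim hm) := by
    haveI : IsFiniteMeasure (μ.trim hm) := isFiniteMeasure_trim hm
    infer_instance
  set D₁ : ℝ := max C₁ 0 with hD₁
  set D₂ : ℝ := max C₂ 0 with hD₂
  have hD₁0 : 0 ≤ D₁ := le_max_right _ _
  have hD₂0 : 0 ≤ D₂ := le_max_right _ _
  set φp : 𝒴₁ → ℝ := fun y => max (φ y) 0 with hφp
  set φn : 𝒴₁ → ℝ := fun y => max (-φ y) 0 with hφn
  set ψp : 𝒴₂ → ℝ := fun y => max (ψ y) 0 with hψp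
  set ψn : 𝒴₂ → ℝ := fun y => max (-ψ y) 0 with hψn
  have hφpm : Measurable φp := hφ.max measurable_const
  have hφnm : Measurable φn := hφ.neg.max measurable_const
  have hψpm : Measurable ψp := hψ.max measurable_const
  have hψnm : Measurable ψn := hψ.neg.max measurable_const
  have hφp0 : ∀ y, 0 ≤ φp y := fun y => le_max_right _ _
  have hφn0 : ∀ y, 0 ≤ φn y := fun y => le_max_right _ _
  have hψp0 : ∀ y, 0 ≤ ψp y := fun y => le_max_right _ _
  have hψn0 : ∀ y, 0 ≤ ψn y := fun y => le_max_right _ _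
  have hφpC : ∀ y, φp y ≤ D₁ :=
    fun y => max_le ((le_abs_self _).trans ((hC₁ y).trans (le_max_left _ _))) hD₁0
  have hφnC : ∀ y, φn y ≤ D₁ :=
    fun y => max_le ((neg_le_abs _).trans ((hC₁ y).trans (le_max_left _ _))) hD₁0
  have hψpC : ∀ y, ψp y ≤ D₂ :=
    fun y => max_le ((le_abs_self _).trans ((hC₂ y).trans (le_max_left _ _))) hD₂0
  have hψnC : ∀ y, ψn y ≤ D₂ :=
    fun y => max_le ((neg_le_abs _).trans ((hC₂ y).trans (le_max_left _ _))) hD₂0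
  have Hpp := factored_condexp_pos μ μ₁ μ₂ Y₁ Y₂ hY₁ hY₂ T₁ T₂ hT₁ hT₂ a b c ha hb hc hdens
    φp ψp hφpm hψpm D₁ D₂ hD₁0 hD₂0 hφp0 hφpC hψp0 hψpC
  have Hpn := factored_condexp_pos μ μ₁ μ₂ Y₁ Y₂ hY₁ hY₂ T₁ T₂ hT₁ hT₂ a b c ha hb hc hdens
    φp ψn hφpm hψnm D₁ D₂ hD₁0 hD₂0 hφp0 hφpC hψn0 hψnC
  have Hnp := factored_condexp_pos μ μ₁ μ₂ Y₁ Y₂ hY₁ hY₂ T₁ T₂ hT₁ hT₂ a b c ha hb hc hdens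
    φn ψp hφnm hψpm D₁ D₂ hD₁0 hD₂0 hφn0 hφnC hψp0 hψpC
  have Hnn := factored_condexp_pos μ μ₁ μ₂ Y₁ Y₂ hY₁ hY₂ T₁ T₂ hT₁ hT₂ a b c ha hb hc hdens
    φn ψn hφnm hψnm D₁ D₂ hD₁0 hD₂0 hφn0 hφnC hψn0 hψnC
  have ipp := integrable_of_bound μ (fun ω => φp (Y₁ ω) * ψp (Y₂ ω))
    (((hφpm.comp hY₁).mul (hψpm.comp hY₂))) (D₁ * D₂) (fun ω => by
      rw [abs_of_nonneg (mul_nonneg (hφp0 _) (hψp0 _))]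
      exact mul_le_mul (hφpC _) (hψpC _) (hψp0 _) hD₁0)
  have ipn := integrable_of_bound μ (fun ω => φp (Y₁ ω) * ψn (Y₂ ω))
    (((hφpm.comp hY₁).mul (hψnm.comp hY₂))) (D₁ * D₂) (fun ω => by
      rw [abs_of_nonneg (mul_nonneg (hφp0 _) (hψn0 _))]
      exact mul_le_mul (hφpC _) (hψnC _) (hψn0 _) hD₁0)
  have inp := integrable_of_bound μ (fun ω => φn (Y₁ ω) * ψp (Y₂ ω))
    (((hφnm.comp hY₁).mul (hψpm.comp hY₂))) (D₁ * D₂) (fun ω => by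
      rw [abs_of_nonneg (mul_nonneg (hφn0 _) (hψp0 _))]
      exact mul_le_mul (hφnC _) (hψpC _) (hψp0 _) hD₁0)
  have inn := integrable_of_bound μ (fun ω => φn (Y₁ ω) * ψn (Y₂ ω))
    (((hφnm.comp hY₁).mul (hψnm.comp hY₂))) (D₁ * D₂) (fun ω => by
      rw [abs_of_nonneg (mul_nonneg (hφn0 _) (hψn0 _))]
      exact mul_le_mul (hφnC _) (hψnC _) (hψn0 _) hD₁0)
  have iφp := integrable_of_bound μ (fun ω => φp (Y₁ ω)) (hφpm.comp hY₁) D₁ (fun ω => by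
    rw [abs_of_nonneg (hφp0 _)]; exact hφpC _)
  have iφn := integrable_of_bound μ (fun ω => φn (Y₁ ω)) (hφnm.comp hY₁) D₁ (fun ω => by
    rw [abs_of_nonneg (hφn0 _)]; exact hφnC _)
  have iψp := integrable_of_bound μ (fun ω => ψp (Y₂ ω)) (hψpm.comp hY₂) D₂ (fun ω => by
    rw [abs_of_nonneg (hψp0 _)]; exact hψpC _)
  have iψn := integrable_of_bound μ (fun ω => ψn (Y₂ ω)) (hψnm.comp hY₂) D₂ (fun ω => by
    rw [abs_of_nonneg (hψn0 _)]; exact hψnC _)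
  have hfe2 : (fun ω => φ (Y₁ ω) * ψ (Y₂ ω))
      = ((fun ω => φp (Y₁ ω) * ψp (Y₂ ω)) - fun ω => φp (Y₁ ω) * ψn (Y₂ ω))
        - ((fun ω => φn (Y₁ ω) * ψp (Y₂ ω)) - fun ω => φn (Y₁ ω) * ψn (Y₂ ω)) := by
    funext ω
    simp only [Pi.sub_apply]
    exact prod_decomp_real (φ (Y₁ ω)) (ψ (Y₂ ω))
  have hfe1 : (fun ω => φ (Y₁ ω)) = (fun ω => φp (Y₁ ω)) - fun ω => φn (Y₁ ω) := by
    funext ω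
    simp only [Pi.sub_apply]
    exact (max_zero_sub_max_neg_zero_eq_self (φ (Y₁ ω))).symm
  have hfe1' : (fun ω => ψ (Y₂ ω)) = (fun ω => ψp (Y₂ ω)) - fun ω => ψn (Y₂ ω) := by
    funext ω
    simp only [Pi.sub_apply]
    exact (max_zero_sub_max_neg_zero_eq_self (ψ (Y₂ ω))).symm
  rw [hfe2, hfe1, hfe1']
  have cA := condExp_sub (m := MeasurableSpace.comap (fun ω => (T₁ (Y₁ ω), T₂ (Y₂ ω)))
    inferInstance) (μ := μ) (ipp.sub ipn) (inp.sub inn)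
  have cB := condExp_sub (m := MeasurableSpace.comap (fun ω => (T₁ (Y₁ ω), T₂ (Y₂ ω)))
    inferInstance) (μ := μ) ipp ipn
  have cC := condExp_sub (m := MeasurableSpace.comap (fun ω => (T₁ (Y₁ ω), T₂ (Y₂ ω)))
    inferInstance) (μ := μ) inp inn
  have cD := condExp_sub (m := MeasurableSpace.comap (fun ω => (T₁ (Y₁ ω), T₂ (Y₂ ω)))
    inferInstance) (μ := μ) iφp iφn
  have cE := condExp_sub (m := MeasurableSpace.comap (fun ω => (T₁ (Y₁ ω), T₂ (Y₂ ω)))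
    inferInstance) (μ := μ) iψp iψn
  filter_upwards [cA, cB, cC, cD, cE, Hpp, Hpn, Hnp, Hnn] with ω eA eB eC eD eE epp epn enp enn
  simp only [Pi.sub_apply] at eA eB eC eD eE ⊢
  rw [eA, eB, eC, eD, eE, epp, epn, enp, enn]
  ring
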